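/- Let Assumption 3 hold. Suppose (x, y) ∈ F̂ ∩ G and ε ≥ 0 satisfy Σ_i g_i(x, y_i) ≤ Σ_i g_i(x, y_i') + ε for all y' ∈ π₋₀(F̂ ∩ G). Then for every index j: g_j(x, y_j) ≤ g_j(x, y_j') + ε for all y_j' with (x, y_j') ∈ F_j; in particular g_j(x, y_j) ≤ g_j*(x) + ε. -/

import Mathlib

/-!
Statement 10 (key step in Proposition 5 of the paper): under Assumption 3, an
ε-minimizer of the aggregate objective over π₋₀(F̂ ∩ G) is an ε-minimizer for each
individual player.
-/

theorem eps_aggregate_implies_eps_individual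
    (n₀ m : ℕ) (n : Fin m → ℕ)
    (F : ∀ i : Fin m, Set ((Fin n₀ → ℝ) × (Fin (n i) → ℝ)))
    (g : ∀ i : Fin m, (Fin n₀ → ℝ) → (Fin (n i) → ℝ) → ℝ)
    (G : Set ((Fin n₀ → ℝ) × (∀ i, Fin (n i) → ℝ)))
    (gstar : ∀ _ : Fin m, (Fin n₀ → ℝ) → EReal)
    (hgstar : ∀ i x, gstar i x =
      ⨅ yi : {yi : Fin (n i) → ℝ // (x, yi) ∈ F i}, ((g i x yi.1 : ℝ) : EReal))
    (Fhat : Set ((Fin n₀ → ℝ) × (∀ i, Fin (n i) → ℝ)))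
    (hFhat : Fhat = {p | ∀ i, (p.1, p.2 i) ∈ F i})
    -- Assumption 3
    (hA3 : ∀ p ∈ Fhat ∩ G, ∀ j : Fin m, ∀ yj' : Fin (n j) → ℝ, (p.1, yj') ∈ F j →
      ∃ q ∈ Fhat ∩ G, (∀ i, i ≠ j → q.2 i = p.2 i) ∧ q.2 j = yj')
    -- the point and tolerance
    (p : (Fin n₀ → ℝ) × (∀ i, Fin (n i) → ℝ))
    (hp : p ∈ Fhat ∩ G)
    (ε : ℝ) (hε : 0 ≤ ε)
    (hmin : ∀ y' : ∀ i, Fin (n i) → ℝ, (∃ x', (x', y') ∈ Fhat ∩ G) →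
      ∑ i, g i p.1 (p.2 i) ≤ (∑ i, g i p.1 (y' i)) + ε) :
    ∀ j : Fin m,
      (∀ yj' : Fin (n j) → ℝ, (p.1, yj') ∈ F j →
        g j p.1 (p.2 j) ≤ g j p.1 yj' + ε) ∧
      ((g j p.1 (p.2 j) : ℝ) : EReal) ≤ gstar j p.1 + (ε : ℝ) := by
  intro j
  have key : ∀ yj' : Fin (n j) → ℝ, (p.1, yj') ∈ F j →
      g j p.1 (p.2 j) ≤ g j p.1 yj' + ε := by
    intro yj' hyj'
    obtain ⟨q, hq, hqne, hqj⟩ := hA3 p hp j yj' hyj'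
    have h := hmin q.2 ⟨q.1, hq⟩
    have hsum : ∑ i, g i p.1 (q.2 i)
        = ∑ i, g i p.1 (p.2 i) - g j p.1 (p.2 j) + g j p.1 yj' := by
      rw [← Finset.add_sum_erase _ _ (Finset.mem_univ j),
          ← Finset.add_sum_erase Finset.univ (fun i => g i p.1 (p.2 i)) (Finset.mem_univ j),
          hqj]
      have : ∑ i ∈ Finset.univ.erase j, g i p.1 (q.2 i)
          = ∑ i ∈ Finset.univ.erase j, g i p.1 (p.2 i) := by
        refine Finset.sum_congr rfl fun i hi => ?_
        rw [hqne i (Finset.ne_of_mem_erase hi)]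
      rw [this]; ring
    rw [hsum] at h
    linarith
  refine ⟨key, ?_⟩
  rw [hgstar]
  have h1 : ((g j p.1 (p.2 j) - ε : ℝ) : EReal) ≤
      ⨅ yi : {yi : Fin (n j) → ℝ // (p.1, yi) ∈ F j}, ((g j p.1 yi.1 : ℝ) : EReal) := by
    refine le_iInf fun yi => ?_
    exact_mod_cast (by linarith [key yi.1 yi.2] :
      (g j p.1 (p.2 j) - ε : ℝ) ≤ g j p.1 yi.1)
  calc ((g j p.1 (p.2 j) : ℝ) : EReal)
      = ((g j p.1 (p.2 j) - ε : ℝ) : EReal) + (ε : ℝ) := by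
        rw [← EReal.coe_add]; norm_num
    _ ≤ _ + (ε : ℝ) := add_le_add_left h1 _
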